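/- If G is a graph and (V1, V2) is a maximum cut of G, then the bipartite graph G' consisting of the edges of G across the cut satisfies d_{G'}(v) ≥ d_G(v)/2 for every vertex v; consequently, if G is 2k-edge-connected then G' is k-edge-connected, and if G has minimum degree d then G' has minimum degree at least d/2. -/

import Mathlib

open Relation
open scoped Classical

section

variable {V : Type} [Fintype V] [DecidableEq V]

/-- The size of the cut `(A, Aᶜ)` in `G`: the number of edges with one
endpoint in `A` and the other outside `A`. -/
noncomputable def cutSize (G : SimpleGraph V) (A : Finset V) : ℕ :=
  ∑ u ∈ A, ((G.neighborFinset u).filter (fun w => w ∉ A)).card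

/-- The bipartite spanning subgraph of `G` consisting of the edges across the
cut `(A, Aᶜ)`. -/
def crossGraph (G : SimpleGraph V) (A : Finset V) : SimpleGraph V where
  Adj u w := G.Adj u w ∧ ¬((u ∈ A) ↔ (w ∈ A))
  symm := by
    constructor
    intro u w h
    exact ⟨h.1.symm, fun hc => h.2 (Iff.comm.mp hc)⟩
  loopless := by
    constructor
    intro u h
    exact h.2 Iff.rfl

/-- `G` is `k`-edge-connected: removing any fewer than `k` edges leaves it
connected. -/
def EdgeConn (G : SimpleGraph V) (k : ℕ) : Prop :=
  ∀ F : Finset (Sym2 V), F.card < k →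
    ∀ u v : V, ReflTransGen (fun a b => G.Adj a b ∧ s(a, b) ∉ F) u v

set_option linter.unusedSectionVars false

noncomputable def cnt (P : V → V → Prop) : ℕ :=
  ∑ p : V × V, if P p.1 p.2 then 1 else 0

lemma cnt_beta (P : V → V → Prop) :
    cnt P = ∑ u : V, ∑ w : V, if P u w then 1 else 0 := by
  unfold cnt
  rw [Fintype.sum_prod_type]

lemma cnt_congr {P Q : V → V → Prop} (h : ∀ u w, P u w ↔ Q u w) : cnt P = cnt Q := by
  unfold cnt
  exact Finset.sum_congr rfl fun p _ => if_congr (h p.1 p.2) rfl rfl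

lemma cnt_swap (P : V → V → Prop) : cnt (fun u w => P w u) = cnt P := by
  unfold cnt
  exact Fintype.sum_equiv (Equiv.prodComm V V) _ _ (fun p => rfl)

lemma cnt_card (P : V → V → Prop) :
    cnt P = ((Finset.univ : Finset (V × V)).filter (fun p => P p.1 p.2)).card := by
  rw [Finset.card_filter]
  unfold cnt
  refine Finset.sum_congr rfl fun p _ => ?_
  split_ifs <;> tauto

lemma cnt_card'' (P : V → V → Prop) (t : Finset (V × V))
    (h : ∀ p : V × V, p ∈ t ↔ P p.1 p.2) : cnt P = t.card := by
  have ht : t = Finset.univ.filter (fun p => P p.1 p.2) := by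
    ext p
    rw [Finset.mem_filter]
    simpa using h p
  rw [ht]
  exact cnt_card P

/-- Ordered count across a cut splits as twice the one-directional count. -/
lemma cnt_cross_split (G : SimpleGraph V) (B : Finset V) :
    cnt (fun u w => G.Adj u w ∧ ¬(u ∈ B ↔ w ∈ B))
      = 2 * cnt (fun u w => G.Adj u w ∧ u ∈ B ∧ w ∉ B) := by
  have hsplit : cnt (fun u w => G.Adj u w ∧ ¬(u ∈ B ↔ w ∈ B))
      = cnt (fun u w => G.Adj u w ∧ u ∈ B ∧ w ∉ B)
        + cnt (fun u w => G.Adj w u ∧ w ∈ B ∧ u ∉ B) := by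
    unfold cnt
    rw [← Finset.sum_add_distrib]
    refine Finset.sum_congr rfl fun p _ => ?_
    obtain ⟨u, w⟩ := p
    by_cases h : G.Adj u w
    · have h' : G.Adj w u := h.symm
      split_ifs <;> tauto
    · have h' : ¬ G.Adj w u := fun hc => h hc.symm
      split_ifs <;> tauto
  have hswap : cnt (fun u w : V => G.Adj w u ∧ w ∈ B ∧ u ∉ B)
      = cnt (fun u w => G.Adj u w ∧ u ∈ B ∧ w ∉ B) := cnt_swap _
  omega

lemma cnt_cut (G : SimpleGraph V) (B : Finset V) :
    cnt (fun u w => G.Adj u w ∧ ¬(u ∈ B ↔ w ∈ B)) = 2 * cutSize G B := by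
  rw [cnt_cross_split]
  have hhalf : cnt (fun u w => G.Adj u w ∧ u ∈ B ∧ w ∉ B) = cutSize G B := by
    rw [cnt_beta]
    unfold cutSize
    have step : ∀ u : V, (∑ w : V, if G.Adj u w ∧ u ∈ B ∧ w ∉ B then (1:ℕ) else 0)
        = if u ∈ B then ((G.neighborFinset u).filter (fun w => w ∉ B)).card else 0 := by
      intro u
      by_cases hu : u ∈ B
      · simp only [hu, if_true]
        rw [Finset.card_filter, SimpleGraph.neighborFinset_eq_filter, Finset.sum_filter]
        refine Finset.sum_congr rfl fun w _ => ?_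
        by_cases h : G.Adj u w <;> simp [h, hu]
      · simp [hu]
    refine Eq.trans (Finset.sum_congr rfl fun u _ => Eq.trans
      (Finset.sum_congr rfl fun w _ => by split_ifs <;> tauto) (step u)) ?_
    rw [Finset.sum_ite_mem, Finset.univ_inter]
  omega

set_option maxHeartbeats 1000000 in
/-- The key max-cut inequality: for any `S`, the number of `G`-edges across `S`
is at most twice the number of cross-`A` edges of `G` across `S`. -/
lemma cnt_key (G : SimpleGraph V) (A : Finset V)
    (hmax : ∀ B : Finset V, cutSize G B ≤ cutSize G A) (S : Finset V) :
    cnt (fun u w => G.Adj u w ∧ ¬(u ∈ S ↔ w ∈ S))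
      ≤ 2 * cnt (fun u w => (G.Adj u w ∧ ¬(u ∈ A ↔ w ∈ A)) ∧ ¬(u ∈ S ↔ w ∈ S)) := by
  set B := symmDiff A S with hB
  have hmem : ∀ x : V, (x ∈ B ↔ ((x ∈ A) ↔ x ∉ S)) := by
    intro x
    simp only [hB, Finset.mem_symmDiff]
    tauto
  have hid : cnt (fun u w => G.Adj u w ∧ ¬(u ∈ A ↔ w ∈ A))
        + cnt (fun u w => G.Adj u w ∧ ¬(u ∈ S ↔ w ∈ S))
      = cnt (fun u w => G.Adj u w ∧ ¬(u ∈ B ↔ w ∈ B))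
        + 2 * cnt (fun u w => (G.Adj u w ∧ ¬(u ∈ A ↔ w ∈ A)) ∧ ¬(u ∈ S ↔ w ∈ S)) := by
    unfold cnt
    rw [← Finset.sum_add_distrib, Finset.mul_sum, ← Finset.sum_add_distrib]
    refine Finset.sum_congr rfl fun p _ => ?_
    have h1 := hmem p.1
    have h2 := hmem p.2
    by_cases hadj : G.Adj p.1 p.2
    · by_cases h1A : p.1 ∈ A <;> by_cases h2A : p.2 ∈ A <;>
        by_cases h1S : p.1 ∈ S <;> by_cases h2S : p.2 ∈ S <;>
        simp [hadj, h1A, h2A, h1S, h2S, h1, h2]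
    · simp [hadj]
  have e1 := cnt_cut G A
  have e2 := cnt_cut G B
  have hle := hmax B
  omega

lemma cnt_deg (H : SimpleGraph V) [DecidableRel H.Adj] (v : V) :
    cnt (fun u w => H.Adj u w ∧ ¬(u = v ↔ w = v)) = 2 * H.degree v := by
  have hsplit : cnt (fun u w => H.Adj u w ∧ ¬(u = v ↔ w = v))
      = cnt (fun u w => H.Adj u w ∧ u = v) + cnt (fun u w => H.Adj w u ∧ w = v) := by
    unfold cnt
    rw [← Finset.sum_add_distrib]
    refine Finset.sum_congr rfl fun p _ => ?_
    by_cases h : H.Adj p.1 p.2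
    · have h' : H.Adj p.2 p.1 := h.symm
      have hne : p.1 ≠ p.2 := h.ne
      split_ifs <;> first | rfl | (exfalso; simp_all)
    · have h' : ¬ H.Adj p.2 p.1 := fun hc => h hc.symm
      split_ifs <;> tauto
  have h2 : cnt (fun u w : V => H.Adj w u ∧ w = v) = cnt (fun u w => H.Adj u w ∧ u = v) :=
    cnt_swap _
  have h3 : cnt (fun u w => H.Adj u w ∧ u = v) = H.degree v := by
    rw [cnt_beta]
    have step : ∀ u : V, (∑ w : V, if H.Adj u w ∧ u = v then (1:ℕ) else 0)
        = if u = v then H.degree v else 0 := by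
      intro u
      by_cases hu : u = v
      · subst hu
        simp only [if_pos rfl]
        rw [SimpleGraph.degree, SimpleGraph.neighborFinset_eq_filter, Finset.card_filter]
        refine Finset.sum_congr rfl fun w _ => ?_
        by_cases h : H.Adj u w <;> simp [h]
      · simp [hu]
    refine Eq.trans (Finset.sum_congr rfl fun u _ => Eq.trans
      (Finset.sum_congr rfl fun w _ => by split_ifs <;> tauto) (step u)) ?_
    simp
  omega

/-- If `(A, Aᶜ)` is a maximum cut of `G`, then the cross graph `G'` satisfies
`d_{G'}(v) ≥ d_G(v)/2`; consequently if `G` is `2k`-edge-connected then `G'`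
is `k`-edge-connected, and if `G` has minimum degree `d` then `G'` has minimum
degree at least `d/2`. -/
theorem max_cut_half_degrees
    (G : SimpleGraph V) (A : Finset V)
    (hmax : ∀ B : Finset V, cutSize G B ≤ cutSize G A) :
    (∀ v : V, (G.degree v : ℚ) / 2 ≤ ((crossGraph G A).degree v : ℚ)) ∧
    (∀ k : ℕ, EdgeConn G (2 * k) → EdgeConn (crossGraph G A) k) ∧
    (∀ d : ℕ, (∀ v : V, d ≤ G.degree v) →
      ∀ v : V, (d : ℚ) / 2 ≤ ((crossGraph G A).degree v : ℚ)) := by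
  have hdeg : ∀ v : V, G.degree v ≤ 2 * (crossGraph G A).degree v := by
    intro v
    have hk := cnt_key G A hmax {v}
    have hd1 : cnt (fun u w => G.Adj u w ∧ ¬(u ∈ ({v} : Finset V) ↔ w ∈ ({v} : Finset V)))
        = 2 * G.degree v := by
      rw [← cnt_deg G v]
      exact cnt_congr fun u w => by simp
    have hd2 : cnt (fun u w => (G.Adj u w ∧ ¬(u ∈ A ↔ w ∈ A))
          ∧ ¬(u ∈ ({v} : Finset V) ↔ w ∈ ({v} : Finset V)))
        = 2 * (crossGraph G A).degree v := by
      rw [← cnt_deg (crossGraph G A) v]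
      exact cnt_congr fun u w => by
        constructor
        · rintro ⟨h1, h2⟩
          exact ⟨h1, by simpa using h2⟩
        · rintro ⟨h1, h2⟩
          exact ⟨h1, by simpa using h2⟩
    omega
  refine ⟨?_, ?_, ?_⟩
  · intro v
    rw [div_le_iff₀ (by norm_num : (0:ℚ) < 2)]
    exact_mod_cast (show G.degree v ≤ (crossGraph G A).degree v * 2 by
      have := hdeg v; omega)
  · intro k hG F hF u v
    by_contra hv
    set R := fun a b => (crossGraph G A).Adj a b ∧ s(a, b) ∉ F with hR
    set S : Finset V := Finset.univ.filter (fun x => ReflTransGen R u x) with hS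
    have hmemS : ∀ x, x ∈ S ↔ ReflTransGen R u x := by
      intro x
      simp [hS]
    have huS : u ∈ S := (hmemS u).2 ReflTransGen.refl
    have hvS : v ∉ S := fun h => hv ((hmemS v).1 h)
    have hFmem : ∀ a b, (crossGraph G A).Adj a b → ¬(a ∈ S ↔ b ∈ S) → s(a, b) ∈ F := by
      intro a b hab hne
      by_contra hnF
      rcases Classical.em (a ∈ S) with ha | ha
      · have hb : b ∉ S := fun hb => hne ⟨fun _ => hb, fun _ => ha⟩
        exact hb ((hmemS b).2 (((hmemS a).1 ha).tail ⟨hab, hnF⟩))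
      · have hb : b ∈ S := by tauto
        have hnF' : s(b, a) ∉ F := by rwa [Sym2.eq_swap]
        exact ha ((hmemS a).2 (((hmemS b).1 hb).tail ⟨hab.symm, hnF'⟩))
    set T1 : Finset (V × V) := Finset.univ.filter
      (fun p => (G.Adj p.1 p.2 ∧ ¬(p.1 ∈ A ↔ p.2 ∈ A)) ∧ ¬(p.1 ∈ S ↔ p.2 ∈ S)) with hT1
    set T2 : Finset (V × V) := Finset.univ.filter
      (fun p => G.Adj p.1 p.2 ∧ p.1 ∈ S ∧ p.2 ∉ S) with hT2
    have hT1mem : ∀ p : V × V, p ∈ T1 ↔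
        ((G.Adj p.1 p.2 ∧ ¬(p.1 ∈ A ↔ p.2 ∈ A)) ∧ ¬(p.1 ∈ S ↔ p.2 ∈ S)) := by
      intro p
      simp [hT1]
    have hT2mem : ∀ p : V × V, p ∈ T2 ↔ (G.Adj p.1 p.2 ∧ p.1 ∈ S ∧ p.2 ∉ S) := by
      intro p
      simp [hT2]
    have hM : cnt (fun u w => (G.Adj u w ∧ ¬(u ∈ A ↔ w ∈ A)) ∧ ¬(u ∈ S ↔ w ∈ S))
        ≤ 2 * F.card := by
      rw [cnt_card'' _ T1 (fun p => hT1mem p)]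
      have hmaps : ∀ p ∈ T1, s(p.1, p.2) ∈ F := by
        intro p hp
        have h := (hT1mem p).1 hp
        exact hFmem p.1 p.2 ⟨h.1.1, h.1.2⟩ h.2
      have hfib : ∀ e ∈ F, (T1.filter (fun p => s(p.1, p.2) = e)).card ≤ 2 := by
        intro e _
        induction e using Sym2.inductionOn with
        | hf a b =>
          have hsub : T1.filter (fun p => s(p.1, p.2) = s(a, b))
              ⊆ {(a, b), (b, a)} := by
            intro p hp
            have h := (Finset.mem_filter.1 hp).2
            rcases Sym2.eq_iff.1 h with ⟨h1, h2⟩ | ⟨h1, h2⟩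
            · simp [Finset.mem_insert, Prod.ext_iff, h1, h2]
            · simp [Finset.mem_insert, Prod.ext_iff, h1, h2]
          exact le_trans (Finset.card_le_card hsub)
            (le_trans (Finset.card_insert_le _ _) (by simp))
      exact Finset.card_le_mul_card_image_of_maps_to hmaps 2 hfib
    have hkey := cnt_key G A hmax S
    have h2N := cnt_cross_split G S
    have hN : cnt (fun u w => G.Adj u w ∧ u ∈ S ∧ w ∉ S) = T2.card :=
      cnt_card'' _ T2 (fun p => hT2mem p)
    set F' : Finset (Sym2 V) := T2.image (fun p => s(p.1, p.2)) with hF'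
    have hF'le : F'.card ≤ T2.card := Finset.card_image_le
    have hF'card : F'.card < 2 * k := by omega
    have hpath := hG F' hF'card u v
    have hstay : ∀ x, ReflTransGen (fun a b => G.Adj a b ∧ s(a, b) ∉ F') u x → x ∈ S := by
      intro x hx
      induction hx with
      | refl => exact huS
      | @tail b c hab hstep ih =>
        by_contra hc
        refine hstep.2 (Finset.mem_image.2 ⟨(b, c), (hT2mem (b, c)).2 ⟨hstep.1, ih, hc⟩, rfl⟩)
    exact hvS (hstay v hpath)
  · intro d hd v
    calc (d : ℚ) / 2 ≤ (G.degree v : ℚ) / 2 := by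
          gcongr
          exact_mod_cast hd v
      _ ≤ ((crossGraph G A).degree v : ℚ) := by
          rw [div_le_iff₀ (by norm_num : (0:ℚ) < 2)]
          exact_mod_cast (show G.degree v ≤ (crossGraph G A).degree v * 2 by
            have := hdeg v; omega)


end
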